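/- Let a be not divisible by 3 and let r ≥ 3. Let N*(3^r) be the number of quadruples (x,y,z,t) in (Z/3^r Z)⁴ not all divisible by 3 such that a·x³ + a·y³ + 3·z³ + 3·t³ = 0 in Z/3^r Z. Then N*(3^r)/3^{3r} = 4/3. -/

import Mathlib

open Finset

namespace P433

theorem neZero_pow3 (k : ℕ) : NeZero ((3:ℕ)^k) := ⟨pow_ne_zero _ (by norm_num)⟩

theorem fiber_card {j k : ℕ} (h : j ≤ k) (c : ZMod (3^j)) :
    (univ.filter fun x : ZMod (3^k) =>
      ZMod.castHom (pow_dvd_pow 3 h) (ZMod (3^j)) x = c).card = 3^(k-j) := by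
  haveI := neZero_pow3 k
  haveI := neZero_pow3 j
  set π := ZMod.castHom (pow_dvd_pow 3 h) (ZMod (3^j)) with hπ
  have key : ∀ c : ZMod (3^j),
      (univ.filter fun x : ZMod (3^k) => π x = c).card
        = (univ.filter fun x : ZMod (3^k) => π x = 0).card := by
    intro c
    have hc : π ((c.val : ℕ) : ZMod (3^k)) = c := by
      rw [map_natCast, ZMod.natCast_zmod_val]
    refine Finset.card_bij' (fun x _ => x - ((c.val : ℕ) : ZMod (3^k)))
      (fun x _ => x + ((c.val : ℕ) : ZMod (3^k))) ?_ ?_ ?_ ?_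
    · intro x hx
      simp only [mem_filter, mem_univ, true_and] at hx ⊢
      rw [map_sub, hx, hc, sub_self]
    · intro x hx
      simp only [mem_filter, mem_univ, true_and] at hx ⊢
      rw [map_add, hx, hc, zero_add]
    · intro x _; ring
    · intro x _; ring
  have total : ∑ c : ZMod (3^j), (univ.filter fun x : ZMod (3^k) => π x = c).card
      = 3^k := by
    rw [← Finset.card_eq_sum_card_fiberwise (fun x _ => mem_univ (π x))]
    simp [ZMod.card]
  rw [Finset.sum_congr rfl (fun c _ => key c)] at total
  rw [Finset.sum_const, Finset.card_univ, ZMod.card, smul_eq_mul] at total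
  rw [key c]
  have h3 : (3:ℕ)^k = 3^j * 3^(k-j) := by rw [← pow_add]; congr 1; omega
  exact Nat.eq_of_mul_eq_mul_left (pow_pos (by norm_num) _) (total.trans h3)





theorem KZ {k : ℕ} (hk : 2 ≤ k) (v : ℤ) : (3:ℤ)^k ∣ v^3 - 1 ↔ (3:ℤ)^(k-1) ∣ v - 1 := by
  obtain ⟨K, rfl⟩ : ∃ K, k = K + 2 := ⟨k - 2, by omega⟩
  have hk1 : K + 2 - 1 = K + 1 := by omega
  rw [hk1]
  constructor
  · intro h
    have h1 : (3:ℤ) ∣ v^3 - 1 := dvd_trans (dvd_pow_self 3 (by omega)) h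
    have h2 : (3:ℤ) ∣ v^3 - v := by
      have : ((v^3 - v : ℤ) : ZMod 3) = 0 := by
        push_cast
        exact (show ∀ w : ZMod 3, w^3 - w = 0 by decide) _
      exact_mod_cast (ZMod.intCast_zmod_eq_zero_iff_dvd _ 3).mp this
    have h3 : (3:ℤ) ∣ v - 1 := by
      have : v - 1 = (v^3 - 1) - (v^3 - v) := by ring
      rw [this]; exact dvd_sub h1 h2
    obtain ⟨t, ht⟩ := h3
    have hv : v = 1 + 3*t := by linarith
    subst hv
    have hfact : (1 + 3*t)^3 - 1 = 9*(t*(1+3*t+3*t^2)) := by ring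
    rw [hfact] at h
    have h9 : (3:ℤ)^(K+2) = 9 * 3^K := by ring
    rw [h9] at h
    have hdd : (3:ℤ)^K ∣ t*(1+3*t+3*t^2) :=
      (mul_dvd_mul_iff_left (by norm_num : (9:ℤ) ≠ 0)).mp h
    have hcop : IsCoprime ((3:ℤ)^K) (1+3*t+3*t^2) := by
      apply IsCoprime.pow_left
      rw [Int.prime_three.coprime_iff_not_dvd]
      intro hd
      have : (3:ℤ) ∣ 1 := by
        have : (1:ℤ) = (1+3*t+3*t^2) - 3*(t+t^2) := by ring
        rw [this]; exact dvd_sub hd ⟨t+t^2, rfl⟩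
      norm_num at this
    obtain ⟨s, hs⟩ := hcop.dvd_of_dvd_mul_right hdd
    exact ⟨s, by rw [hs]; ring⟩
  · rintro ⟨s, hs⟩
    have hv : v = 1 + 3^(K+1)*s := by linarith
    subst hv
    exact ⟨s + 3^(K+1)*s^2 + 3^(2*K+1)*s^3, by ring⟩

theorem cube_eq_one_iff {k : ℕ} (hk : 2 ≤ k) (x : ZMod (3^k)) :
    x^3 = 1 ↔
      ZMod.castHom (pow_dvd_pow 3 (Nat.sub_le k 1)) (ZMod (3^(k-1))) x = 1 := by
  haveI := neZero_pow3 k; haveI := neZero_pow3 (k-1)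
  set v : ℤ := (x.val : ℤ) with hv
  have hx : ((v : ℤ) : ZMod (3^k)) = x := by
    rw [hv, Int.cast_natCast, ZMod.natCast_zmod_val]
  have h1 : x^3 = 1 ↔ (3:ℤ)^k ∣ v^3 - 1 := by
    have hz := ZMod.intCast_zmod_eq_zero_iff_dvd (v^3-1) (3^k)
    push_cast at hz
    rw [← hz, ← hx]
    push_cast
    rw [sub_eq_zero]
  have h2 : ZMod.castHom (pow_dvd_pow 3 (Nat.sub_le k 1)) (ZMod (3^(k-1))) x = 1 ↔
      (3:ℤ)^(k-1) ∣ v - 1 := by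
    have hπ : ZMod.castHom (pow_dvd_pow 3 (Nat.sub_le k 1)) (ZMod (3^(k-1))) x
        = ((v : ℤ) : ZMod (3^(k-1))) := by
      rw [ZMod.castHom_apply, hv, Int.cast_natCast, ZMod.natCast_val]
    have hz := ZMod.intCast_zmod_eq_zero_iff_dvd (v-1) (3^(k-1))
    push_cast at hz
    rw [hπ, ← hz]
    push_cast
    rw [sub_eq_zero]
  rw [h1, h2, KZ hk]

theorem card_roots_one {k : ℕ} (hk : 2 ≤ k) :
    (univ.filter fun x : ZMod (3^k) => x^3 = 1).card = 3 := by
  have : (univ.filter fun x : ZMod (3^k) => x^3 = 1)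
      = (univ.filter fun x : ZMod (3^k) =>
          ZMod.castHom (pow_dvd_pow 3 (Nat.sub_le k 1)) (ZMod (3^(k-1))) x = 1) := by
    apply filter_congr
    intro x _
    simp [cube_eq_one_iff hk x]
  rw [this, fiber_card (Nat.sub_le k 1)]
  have h1 : k - (k-1) = 1 := by omega
  rw [h1, pow_one]

theorem card_roots {k : ℕ} (hk : 2 ≤ k) (c x₀ : ZMod (3^k)) (h₀ : x₀^3 = c) (hu : IsUnit x₀) :
    (univ.filter fun x : ZMod (3^k) => x^3 = c).card = 3 := by
  haveI := neZero_pow3 k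
  obtain ⟨u, rfl⟩ := hu
  have himg : (univ.filter fun x : ZMod (3^k) => x^3 = c)
      = (univ.filter fun t : ZMod (3^k) => t^3 = 1).image (fun t => (u:ZMod (3^k)) * t) := by
    ext x
    simp only [mem_filter, mem_univ, true_and, mem_image]
    constructor
    · intro hx
      refine ⟨(u⁻¹ : (ZMod (3^k))ˣ) * x, ?_, ?_⟩
      · rw [mul_pow, hx, ← h₀, ← mul_pow, Units.inv_mul, one_pow]
      · rw [← mul_assoc, Units.mul_inv, one_mul]
    · rintro ⟨t, ht, rfl⟩
      rw [mul_pow, ht, mul_one, h₀]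
  rw [himg, Finset.card_image_of_injective _ (u.isUnit.mul_right_injective),
    card_roots_one hk]


noncomputable def d3 {k : ℕ} (hk : 1 ≤ k) : ZMod (3^k) →+* ZMod (3^1) :=
  ZMod.castHom (pow_dvd_pow 3 hk) (ZMod (3^1))

noncomputable def d9 {k : ℕ} (hk : 2 ≤ k) : ZMod (3^k) →+* ZMod (3^2) :=
  ZMod.castHom (pow_dvd_pow 3 hk) (ZMod (3^2))

noncomputable def e3 : ZMod (3^2) →+* ZMod (3^1) :=
  ZMod.castHom (pow_dvd_pow 3 one_le_two) (ZMod (3^1))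

theorem e3_d9 {k : ℕ} (hk : 2 ≤ k) (x : ZMod (3^k)) :
    e3 (d9 hk x) = d3 (le_trans one_le_two hk) x := by
  have h := ZMod.castHom_comp (pow_dvd_pow 3 one_le_two) (pow_dvd_pow 3 hk)
  exact DFunLike.congr_fun h x

theorem dvd_iff_d3 {k : ℕ} (hk : 1 ≤ k) (x : ZMod (3^k)) :
    (3 : ZMod (3^k)) ∣ x ↔ d3 hk x = 0 := by
  haveI := neZero_pow3 k
  constructor
  · rintro ⟨y, rfl⟩
    rw [map_mul, show (d3 hk) 3 = 3 from map_ofNat _ 3,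
      show (3 : ZMod (3^1)) = 0 from rfl, zero_mul]
  · intro h
    have hv : ((x.val : ℕ) : ZMod (3^1)) = 0 := by
      rwa [d3, ZMod.castHom_apply, ← ZMod.natCast_val] at h
    rw [ZMod.natCast_eq_zero_iff] at hv
    obtain ⟨m, hm⟩ := hv
    refine ⟨(m : ZMod (3^k)), ?_⟩
    rw [← ZMod.natCast_zmod_val x, hm]
    push_cast
    ring

theorem isUnit_iff_d3 {k : ℕ} (hk : 1 ≤ k) (x : ZMod (3^k)) :
    IsUnit x ↔ d3 hk x ≠ 0 := by
  haveI := neZero_pow3 k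
  constructor
  · rintro ⟨u, rfl⟩ h0
    have : (d3 hk) ↑u * (d3 hk) ↑u⁻¹ = 1 := by
      rw [← map_mul, Units.mul_inv, map_one]
    rw [h0, zero_mul] at this
    exact (by decide : (0:ZMod (3^1)) ≠ 1) this
  · intro h
    have hval : ¬ (3 ∣ x.val) := by
      intro hd
      apply h
      rw [d3, ZMod.castHom_apply, ← ZMod.natCast_val,
        ZMod.natCast_eq_zero_iff]
      exact_mod_cast hd
    have hcop : Nat.Coprime x.val (3^k) :=
      Nat.Coprime.pow_right k
        (Nat.coprime_comm.mp ((Nat.Prime.coprime_iff_not_dvd Nat.prime_three).mpr hval))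
    rw [← ZMod.natCast_zmod_val x]
    exact (ZMod.isUnit_iff_coprime _ _).mpr hcop

set_option maxRecDepth 1000000 in
theorem L23 : ∀ Z T : ZMod (3^2), (e3 (Z+T) = 0 ↔ e3 (Z^3+T^3) = 0) := by decide

set_option maxRecDepth 1000000 in
set_option maxHeartbeats 1600000 in
theorem D1' : ∀ A X Y S : ZMod (3^2), e3 A ≠ 0 → e3 Y ≠ 0 →
    A*X^3+A*Y^3+3*S = 0 → e3 S = 0 := by decide

set_option maxRecDepth 1000000 in
set_option maxHeartbeats 1600000 in
theorem D2' : ∀ A Y S C : ZMod (3^2), e3 A ≠ 0 → e3 Y ≠ 0 → e3 S = 0 →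
    A*C = -(A*Y^3+3*S) → (C = 1 ∨ C = 8) := by decide

set_option maxRecDepth 1000000 in
theorem D0 : ∀ w : ZMod (3^2), e3 w ≠ 0 → (w^3 = 1 ∨ w^3 = 8) := by decide

set_option maxRecDepth 1000000 in
theorem D3 : ∀ Z : ZMod (3^2), e3 Z ≠ 0 → (-Z^3 = 1 ∨ -Z^3 = 8) := by decide

theorem D4 : ∀ A Y : ZMod (3^1), A ≠ 0 → A*Y^3 = 0 → Y = 0 := by decide

set_option maxRecDepth 1000000 in
theorem D5a : ∀ X : ZMod (3^2), e3 X = 0 → X^3 = 0 := by decide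

set_option maxRecDepth 1000000 in
theorem D5b : ∀ S : ZMod (3^2), 3*S = 0 → e3 S = 0 := by decide

theorem D6 : ∀ Z T : ZMod (3^1), Z + T = 0 → (Z = 0 ↔ T = 0) := by decide

theorem exists_cube_root {k : ℕ} (hk : 2 ≤ k) (c : ZMod (3^k))
    (h9 : d9 hk c = 1 ∨ d9 hk c = 8) : ∃ x : ZMod (3^k), x^3 = c := by
  haveI := neZero_pow3 k
  have hk1 : 1 ≤ k := le_trans one_le_two hk
  set U : Finset (ZMod (3^k)) := univ.filter (fun x => ¬ d3 hk1 x = 0) with hU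
  have hUcard : U.card = 2*3^(k-1) := by
    have h0 : (univ.filter fun x : ZMod (3^k) => d3 hk1 x = 0).card = 3^(k-1) :=
      fiber_card hk1 (0 : ZMod (3^1))
    have hsplit := Finset.card_filter_add_card_filter_not
      (s := (univ : Finset (ZMod (3^k)))) (p := fun x => d3 hk1 x = 0)
    rw [h0, Finset.card_univ, ZMod.card] at hsplit
    have h3 : (3:ℕ)^k = 3 * 3^(k-1) := by
      rw [← pow_succ']; congr 1; omega
    rw [hU]
    omega
  set Cu : Finset (ZMod (3^k)) := U.image (fun x => x^3) with hCu
  have hroots : ∀ c' ∈ Cu, (univ.filter fun x : ZMod (3^k) => x^3 = c').card = 3 := by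
    intro c' hc'
    rw [hCu, Finset.mem_image] at hc'
    obtain ⟨x₀, hx₀U, hx₀⟩ := hc'
    rw [hU, mem_filter] at hx₀U
    exact card_roots hk c' x₀ hx₀ ((isUnit_iff_d3 hk1 x₀).mpr hx₀U.2)
  have hCucard : Cu.card = 2*3^(k-2) := by
    have hsum := Finset.card_eq_sum_card_image (fun x : ZMod (3^k) => x^3) U
    have : ∀ c' ∈ Cu, (U.filter fun x => x^3 = c').card = 3 := by
      intro c' hc'
      have hUF : U.filter (fun x => x^3 = c') = univ.filter (fun x : ZMod (3^k) => x^3 = c') := by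
        ext x
        simp only [hU, Finset.filter_filter, mem_filter, mem_univ, true_and]
        constructor
        · rintro ⟨h1, h2⟩; exact h2
        · intro h2
          refine ⟨?_, h2⟩
          -- x is a unit since x^3 = c' is a unit
          rw [hCu, Finset.mem_image] at hc'
          obtain ⟨x₀, hx₀U, hx₀⟩ := hc'
          rw [hU, mem_filter] at hx₀U
          have hcu : IsUnit c' := by
            rw [← hx₀]
            exact ((isUnit_iff_d3 hk1 x₀).mpr hx₀U.2).pow 3
          have : IsUnit x := by
            have : IsUnit (x^3) := h2 ▸ hcu
            exact (isUnit_pow_iff (by norm_num : (3:ℕ) ≠ 0)).mp this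
          exact (isUnit_iff_d3 hk1 x).mp this
      rw [hUF]
      exact hroots c' hc'
    rw [← hCu] at hsum
    rw [Finset.sum_congr rfl this, Finset.sum_const, smul_eq_mul] at hsum
    rw [hUcard] at hsum
    have h3 : (3:ℕ)^(k-1) = 3^(k-2) * 3 := by
      rw [← pow_succ]; congr 1; omega
    omega
  set B9 : Finset (ZMod (3^k)) :=
    univ.filter (fun x => d9 hk x = 1 ∨ d9 hk x = 8) with hB9
  have hB9card : B9.card = 2*3^(k-2) := by
    rw [hB9, Finset.filter_or, Finset.card_union_of_disjoint]
    · simp only [d9]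
      erw [fiber_card hk (1 : ZMod (3^2)), fiber_card hk (8 : ZMod (3^2))]
      omega
    · rw [Finset.disjoint_filter]
      intro x _ h1 h8
      rw [h1] at h8
      exact (by decide : (1 : ZMod (3^2)) ≠ 8) h8
  have hsub : Cu ⊆ B9 := by
    intro c' hc'
    rw [hCu, Finset.mem_image] at hc'
    obtain ⟨x₀, hx₀U, hx₀⟩ := hc'
    rw [hU, mem_filter] at hx₀U
    rw [hB9, mem_filter]
    refine ⟨mem_univ _, ?_⟩
    rw [← hx₀, map_pow]
    exact D0 _ (by rw [e3_d9 hk x₀]; exact hx₀U.2)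
  have heq : Cu = B9 := Finset.eq_of_subset_of_card_le hsub (by omega)
  have hcB : c ∈ B9 := by rw [hB9, mem_filter]; exact ⟨mem_univ _, h9⟩
  rw [← heq, hCu, Finset.mem_image] at hcB
  obtain ⟨x, _, hx⟩ := hcB
  exact ⟨x, hx⟩


theorem Dc1 : ∀ A X Y Z T : ZMod (3^1), A ≠ 0 → A*X^3+A*Y^3+3*Z^3+3*T^3 = 0 → Y = 0 → X = 0 := by
  decide

theorem Dc2 : ∀ A Y C : ZMod (3^1), A ≠ 0 → Y ≠ 0 → A*C = -(A*Y^3) → C ≠ 0 := by decide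

theorem Dc3 : ∀ w : ZMod (3^1), w ≠ 0 → -(w^3) ≠ 0 := by decide

theorem count_case1 {k : ℕ} (hk : 2 ≤ k) (a : ℤ) (ha : ¬ (3:ℤ) ∣ a) (y z t : ZMod (3^k)) :
    (univ.filter fun x : ZMod (3^k) =>
        d3 (le_trans one_le_two hk) x ≠ 0 ∧
        (a : ZMod (3^k))*x^3 + (a : ZMod (3^k))*y^3 + 3*z^3 + 3*t^3 = 0).card
      = if (d3 (le_trans one_le_two hk) y ≠ 0 ∧ d3 (le_trans one_le_two hk) (z+t) = 0)
        then 3 else 0 := by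
  haveI := neZero_pow3 k
  set hk1 : 1 ≤ k := le_trans one_le_two hk
  have h30 : (3 : ZMod (3^1)) = 0 := rfl
  have hA3 : d3 hk1 ((a : ℤ) : ZMod (3^k)) ≠ 0 := by
    rw [map_intCast]
    intro h0
    rw [ZMod.intCast_zmod_eq_zero_iff_dvd] at h0
    apply ha
    exact_mod_cast h0
  have hA : IsUnit ((a : ℤ) : ZMod (3^k)) := (isUnit_iff_d3 hk1 _).mpr hA3
  by_cases hy : d3 hk1 y = 0
  · rw [if_neg (fun hcond => hcond.1 hy)]
    rw [Finset.card_eq_zero, Finset.filter_eq_empty_iff]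
    rintro x - ⟨hxu, heq⟩
    have h0 := congrArg (d3 hk1) heq
    simp only [map_add, map_mul, map_pow, map_ofNat, map_zero] at h0
    exact hxu (Dc1 _ _ _ _ _ hA3 h0 hy)
  · by_cases hzt : d3 hk1 (z+t) = 0
    · rw [if_pos ⟨hy, hzt⟩]
      set A : ZMod (3^k) := ((a : ℤ) : ZMod (3^k)) with hAdef
      set u := hA.unit with hu
      set c : ZMod (3^k) := ↑u⁻¹ * (-(A*y^3 + 3*z^3 + 3*t^3)) with hc
      have hAc : A * c = -(A*y^3 + 3*z^3 + 3*t^3) := by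
        rw [hc, ← mul_assoc, show A = ↑u from (hA.unit_spec).symm, Units.mul_inv, one_mul]
      have hd3c : d3 hk1 c ≠ 0 := by
        have h1 := congrArg (d3 hk1) hAc
        simp only [map_mul, map_add, map_neg, map_pow, map_ofNat] at h1
        have h2 : d3 hk1 A * d3 hk1 c = -(d3 hk1 A * (d3 hk1 y)^3) := by
          linear_combination h1 - ((d3 hk1 z)^3 + (d3 hk1 t)^3) * h30
        exact Dc2 _ _ _ hA3 hy h2
      have hcu : IsUnit c := (isUnit_iff_d3 hk1 c).mpr hd3c
      have h9c : d9 hk c = 1 ∨ d9 hk c = 8 := by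
        have h1 := congrArg (d9 hk) hAc
        simp only [map_mul, map_add, map_neg, map_pow, map_ofNat] at h1
        have h2 : d9 hk A * d9 hk c
            = -(d9 hk A * (d9 hk y)^3 + 3*((d9 hk z)^3 + (d9 hk t)^3)) := by
          linear_combination h1
        refine D2' (d9 hk A) (d9 hk y) ((d9 hk z)^3 + (d9 hk t)^3) (d9 hk c) ?_ ?_ ?_ h2
        · rw [e3_d9 hk A]; exact hA3
        · rw [e3_d9 hk y]; exact hy
        · rw [← L23, ← map_add, e3_d9 hk (z+t)]; exact hzt
      obtain ⟨x₀, hx₀⟩ := exists_cube_root hk c h9c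
      have hx₀u : IsUnit x₀ :=
        (isUnit_pow_iff (by norm_num : (3:ℕ) ≠ 0)).mp (hx₀ ▸ hcu)
      have hfilter : (univ.filter fun x : ZMod (3^k) =>
          d3 hk1 x ≠ 0 ∧ A*x^3 + A*y^3 + 3*z^3 + 3*t^3 = 0)
          = univ.filter fun x : ZMod (3^k) => x^3 = c := by
        apply filter_congr
        intro x _
        constructor
        · rintro ⟨hxu, heq⟩
          apply hA.mul_right_injective
          show A * x^3 = A * c
          rw [hAc]
          linear_combination heq
        · intro hxc
          constructor
          · have : IsUnit x := (isUnit_pow_iff (by norm_num : (3:ℕ) ≠ 0)).mp (hxc ▸ hcu)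
            exact (isUnit_iff_d3 hk1 x).mp this
          · have hax : A * x^3 = -(A*y^3 + 3*z^3 + 3*t^3) := by rw [hxc, hAc]
            linear_combination hax
      rw [hfilter]
      exact card_roots hk c x₀ hx₀ hx₀u
    · rw [if_neg (fun hcond => hzt hcond.2)]
      rw [Finset.card_eq_zero, Finset.filter_eq_empty_iff]
      rintro x - ⟨hxu, heq⟩
      apply hzt
      have h1 := congrArg (d9 hk) heq
      simp only [map_add, map_mul, map_pow, map_ofNat, map_zero] at h1
      have h2 : d9 hk ((a : ℤ) : ZMod (3^k)) * (d9 hk x)^3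
          + d9 hk ((a : ℤ) : ZMod (3^k)) * (d9 hk y)^3
          + 3*((d9 hk z)^3 + (d9 hk t)^3) = 0 := by
        linear_combination h1
      have h3 := D1' _ _ _ _ (by rw [e3_d9 hk]; exact hA3) (by rw [e3_d9 hk]; exact hy) h2
      rw [← L23 (d9 hk z) (d9 hk t)] at h3
      rwa [← map_add, e3_d9 hk (z+t)] at h3



theorem count_case2 {k : ℕ} (hk : 3 ≤ k) (hk1 : 1 ≤ k) (a : ℤ) (x y z : ZMod (3^k))
    (hx : d3 hk1 x = 0) (hy : d3 hk1 y = 0) (hz : d3 hk1 z ≠ 0) :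
    (univ.filter fun t : ZMod (3^k) =>
      (a : ZMod (3^k))*x^3 + (a : ZMod (3^k))*y^3 + 3*z^3 + 3*t^3 = 0).card = 9 := by
  haveI := neZero_pow3 k
  haveI := neZero_pow3 (k-1)
  have hk2 : 2 ≤ k := by omega
  have hk1' : 2 ≤ k - 1 := by omega
  have hk1'' : 1 ≤ k - 1 := by omega
  have h90 : (9 : ZMod (3^1)) = 0 := rfl
  have h90' : (9 : ZMod (3^2)) = 0 := by decide
  set π := ZMod.castHom (pow_dvd_pow 3 (Nat.sub_le k 1)) (ZMod (3^(k-1))) with hπ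
  obtain ⟨x₀, hx₀⟩ := (dvd_iff_d3 hk1 x).mpr hx
  obtain ⟨y₀, hy₀⟩ := (dvd_iff_d3 hk1 y).mpr hy
  have key1 : ∀ u : ZMod (3^k), (3*u = 0 ↔ π u = 0) := by
    intro u
    have h3k : (3:ℕ)^k = 3*3^(k-1) := by rw [← pow_succ']; congr 1; omega
    constructor
    · intro h
      have h2 : ((3 * u.val : ℕ) : ZMod (3^k)) = 0 := by
        rw [Nat.cast_mul, Nat.cast_ofNat, ZMod.natCast_zmod_val]
        exact h
      rw [ZMod.natCast_eq_zero_iff] at h2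
      obtain ⟨q, hq⟩ := h2
      have hdvd : 3^(k-1) ∣ u.val :=
        ⟨q, Nat.eq_of_mul_eq_mul_left (by norm_num : 0 < 3)
          (by rw [hq, h3k, mul_assoc])⟩
      rw [hπ, ZMod.castHom_apply, ← ZMod.natCast_val, ZMod.natCast_eq_zero_iff]
      exact hdvd
    · intro h
      rw [hπ, ZMod.castHom_apply, ← ZMod.natCast_val,
        ZMod.natCast_eq_zero_iff] at h
      obtain ⟨m, hm⟩ := h
      have hu : u = ((u.val : ℕ) : ZMod (3^k)) := (ZMod.natCast_zmod_val u).symm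
      rw [hu, hm]
      calc (3:ZMod (3^k)) * ((3^(k-1)*m : ℕ) : ZMod (3^k))
          = ((3*(3^(k-1)*m) : ℕ) : ZMod (3^k)) := by push_cast; ring
        _ = (((3^k*m : ℕ)) : ZMod (3^k)) := by rw [← mul_assoc, ← h3k]
        _ = 0 := by rw [Nat.cast_mul, ZMod.natCast_self, zero_mul]
  set w : ZMod (3^k) := 9*((a : ZMod (3^k)))*x₀^3 + 9*((a : ZMod (3^k)))*y₀^3 + z^3 with hw
  set c : ZMod (3^(k-1)) := -(π w) with hcdef
  have hpred : ∀ t : ZMod (3^k),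
      ((a : ZMod (3^k))*x^3 + (a : ZMod (3^k))*y^3 + 3*z^3 + 3*t^3 = 0 ↔ (π t)^3 = c) := by
    intro t
    rw [hx₀, hy₀]
    have hiff1 : ((a : ZMod (3^k))*(3*x₀)^3 + (a : ZMod (3^k))*(3*y₀)^3 + 3*z^3+3*t^3 = 0)
        ↔ 3*(t^3 + w) = 0 := by
      rw [hw]
      constructor <;> intro h <;> linear_combination h
    rw [hiff1, key1 (t^3+w), map_add, map_pow, hcdef]
    constructor <;> intro h <;> linear_combination h
  have hcompw : d3 hk1'' (π w) = d3 hk1 w :=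
    DFunLike.congr_fun
      (ZMod.castHom_comp (pow_dvd_pow 3 hk1'') (pow_dvd_pow 3 (Nat.sub_le k 1))) w
  have hcompw9 : d9 hk1' (π w) = d9 hk2 w :=
    DFunLike.congr_fun
      (ZMod.castHom_comp (pow_dvd_pow 3 hk1') (pow_dvd_pow 3 (Nat.sub_le k 1))) w
  have hd3w : d3 hk1 w = (d3 hk1 z)^3 := by
    rw [hw]
    simp only [map_add, map_mul, map_pow, map_ofNat]
    linear_combination ((d3 hk1 ((a:ℤ) : ZMod (3^k)))*(d3 hk1 x₀)^3
      + (d3 hk1 ((a:ℤ) : ZMod (3^k)))*(d3 hk1 y₀)^3) * h90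
  have hd3c : d3 hk1'' c ≠ 0 := by
    rw [hcdef, map_neg, hcompw, hd3w]
    exact Dc3 _ hz
  have hcu : IsUnit c := (isUnit_iff_d3 hk1'' c).mpr hd3c
  have hd9w : d9 hk2 w = (d9 hk2 z)^3 := by
    rw [hw]
    simp only [map_add, map_mul, map_pow, map_ofNat]
    linear_combination ((d9 hk2 ((a:ℤ) : ZMod (3^k)))*(d9 hk2 x₀)^3
      + (d9 hk2 ((a:ℤ) : ZMod (3^k)))*(d9 hk2 y₀)^3) * h90'
  have h9c : d9 hk1' c = 1 ∨ d9 hk1' c = 8 := by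
    rw [hcdef, map_neg, hcompw9, hd9w]
    exact D3 _ (by rw [e3_d9 hk2 z]; exact hz)
  obtain ⟨s₀, hs₀⟩ := exists_cube_root hk1' c h9c
  have hs₀u : IsUnit s₀ :=
    (isUnit_pow_iff (by norm_num : (3:ℕ) ≠ 0)).mp (hs₀ ▸ hcu)
  have hRcard : (univ.filter fun s : ZMod (3^(k-1)) => s^3 = c).card = 3 :=
    card_roots hk1' c s₀ hs₀ hs₀u
  rw [filter_congr (fun t _ => hpred t)]
  have hmap : ∀ t ∈ (univ.filter fun t : ZMod (3^k) => (π t)^3 = c),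
      π t ∈ (univ.filter fun s : ZMod (3^(k-1)) => s^3 = c) := by
    intro t ht
    rw [mem_filter] at ht ⊢
    exact ⟨mem_univ _, ht.2⟩
  rw [Finset.card_eq_sum_card_fiberwise hmap]
  have hfib : ∀ b ∈ (univ.filter fun s : ZMod (3^(k-1)) => s^3 = c),
      ((univ.filter fun t : ZMod (3^k) => (π t)^3 = c).filter fun t => π t = b).card = 3 := by
    intro b hb
    rw [mem_filter] at hb
    have heq2 : ((univ.filter fun t : ZMod (3^k) => (π t)^3 = c).filter fun t => π t = b)
        = univ.filter (fun t : ZMod (3^k) => π t = b) := by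
      rw [Finset.filter_filter]
      apply filter_congr
      intro t _
      constructor
      · rintro ⟨h1, h2⟩; exact h2
      · intro h2; exact ⟨by rw [h2, hb.2], h2⟩
    rw [heq2]
    have hfc := fiber_card (Nat.sub_le k 1) b
    rwa [show k-(k-1) = 1 from by omega, pow_one] at hfc
  rw [Finset.sum_congr rfl hfib, Finset.sum_const, smul_eq_mul, hRcard]



theorem d3_intCast_ne {k : ℕ} (hk1 : 1 ≤ k) (a : ℤ) (ha : ¬ (3:ℤ) ∣ a) :
    d3 hk1 ((a : ℤ) : ZMod (3^k)) ≠ 0 := by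
  rw [map_intCast]
  intro h0
  rw [ZMod.intCast_zmod_eq_zero_iff_dvd] at h0
  exact ha (by exact_mod_cast h0)

theorem card_unit_filter {k : ℕ} (hk1 : 1 ≤ k) :
    (univ.filter fun x : ZMod (3^k) => d3 hk1 x ≠ 0).card = 2*3^(k-1) := by
  haveI := neZero_pow3 k
  have h0 : (univ.filter fun x : ZMod (3^k) => d3 hk1 x = 0).card = 3^(k-1) :=
    fiber_card hk1 (0 : ZMod (3^1))
  have hnot : (univ.filter fun x : ZMod (3^k) => d3 hk1 x ≠ 0)
      = univ \ (univ.filter fun x : ZMod (3^k) => d3 hk1 x = 0) :=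
    Finset.filter_not _ _
  rw [hnot, Finset.card_sdiff_of_subset (Finset.filter_subset _ _), h0, Finset.card_univ, ZMod.card]
  have h3 : (3:ℕ)^k = 3 * 3^(k-1) := by
    rw [← pow_succ']; congr 1; omega
  omega

theorem card_filter_pair_snd {α β : Type*} [Fintype α] [Fintype β] [DecidableEq α] [DecidableEq β]
    (p : α → β → Prop) [∀ a b, Decidable (p a b)] :
    (univ.filter fun v : α × β => p v.1 v.2).card
      = ∑ b : β, (univ.filter fun a : α => p a b).card := by
  rw [Finset.card_eq_sum_card_fiberwise (f := Prod.snd) (t := univ) (fun v _ => mem_univ _)]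
  refine Finset.sum_congr rfl (fun b _ => ?_)
  rw [Finset.filter_filter]
  refine Finset.card_bij' (fun v _ => v.1) (fun a _ => (a, b)) ?_ ?_ ?_ ?_
  · intro v hv
    rw [mem_filter] at hv
    obtain ⟨-, h1, h2⟩ := hv
    subst h2
    rw [mem_filter]
    exact ⟨mem_univ _, h1⟩
  · intro x hx
    rw [mem_filter] at hx ⊢
    exact ⟨mem_univ _, hx.2, rfl⟩
  · intro v hv
    rw [mem_filter] at hv
    obtain ⟨-, h1, h2⟩ := hv
    subst h2
    rfl
  · intro x _
    rfl

theorem card_filter_quad_fst {M : Type*} [Fintype M] [DecidableEq M]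
    (p : M → M → M → M → Prop) [∀ a b c d, Decidable (p a b c d)] :
    (univ.filter fun v : M × M × M × M => p v.1 v.2.1 v.2.2.1 v.2.2.2).card
      = ∑ w : M × M × M, (univ.filter fun x : M => p x w.1 w.2.1 w.2.2).card := by
  rw [Finset.card_eq_sum_card_fiberwise (f := fun v => v.2) (t := univ) (fun v _ => mem_univ _)]
  refine Finset.sum_congr rfl (fun w _ => ?_)
  rw [Finset.filter_filter]
  refine Finset.card_bij' (fun v _ => v.1) (fun x _ => (x, w)) ?_ ?_ ?_ ?_
  · intro v hv
    rw [mem_filter] at hv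
    obtain ⟨-, h1, h2⟩ := hv
    subst h2
    rw [mem_filter]
    exact ⟨mem_univ _, h1⟩
  · intro x hx
    rw [mem_filter] at hx ⊢
    exact ⟨mem_univ _, hx.2, rfl⟩
  · intro v hv
    rw [mem_filter] at hv
    obtain ⟨-, h1, h2⟩ := hv
    subst h2
    rfl
  · intro x _
    rfl

theorem card_filter_quad_last {M : Type*} [Fintype M] [DecidableEq M]
    (p : M → M → M → M → Prop) [∀ a b c d, Decidable (p a b c d)] :
    (univ.filter fun v : M × M × M × M => p v.1 v.2.1 v.2.2.1 v.2.2.2).card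
      = ∑ w : M × M × M, (univ.filter fun t : M => p w.1 w.2.1 w.2.2 t).card := by
  rw [Finset.card_eq_sum_card_fiberwise (f := fun v => (v.1, v.2.1, v.2.2.1)) (t := univ)
    (fun v _ => mem_univ _)]
  refine Finset.sum_congr rfl (fun w _ => ?_)
  rw [Finset.filter_filter]
  refine Finset.card_bij' (fun v _ => v.2.2.2) (fun t _ => (w.1, w.2.1, w.2.2, t)) ?_ ?_ ?_ ?_
  · intro v hv
    rw [mem_filter] at hv
    obtain ⟨-, h1, h2⟩ := hv
    subst h2
    rw [mem_filter]
    exact ⟨mem_univ _, h1⟩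
  · intro t ht
    rw [mem_filter] at ht ⊢
    exact ⟨mem_univ _, ht.2, rfl⟩
  · intro v hv
    rw [mem_filter] at hv
    obtain ⟨-, h1, h2⟩ := hv
    subst h2
    rfl
  · intro t _
    rfl

theorem card_pair_sum_zero {k : ℕ} (hk1 : 1 ≤ k) :
    (univ.filter fun u : ZMod (3^k) × ZMod (3^k) => d3 hk1 (u.1+u.2) = 0).card
      = 3^k * 3^(k-1) := by
  haveI := neZero_pow3 k
  rw [card_filter_pair_snd (fun z' t' => d3 hk1 (z'+t') = 0)]
  have hinner : ∀ b : ZMod (3^k),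
      (univ.filter fun z' : ZMod (3^k) => d3 hk1 (z'+b) = 0).card = 3^(k-1) := by
    intro b
    have hcongr : (univ.filter fun z' : ZMod (3^k) => d3 hk1 (z'+b) = 0)
        = univ.filter fun z' : ZMod (3^k) => d3 hk1 z' = -(d3 hk1 b) := by
      apply filter_congr
      intro z' _
      rw [map_add]
      constructor
      · intro h; linear_combination h
      · intro h; linear_combination h
    rw [hcongr]
    exact fiber_card hk1 (-(d3 hk1 b))
  rw [Finset.sum_congr rfl (fun b _ => hinner b), Finset.sum_const, Finset.card_univ,
    ZMod.card, smul_eq_mul]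



theorem card_filter_mul {α β : Type*} [Fintype α] [Fintype β] [DecidableEq α] [DecidableEq β]
    (p : α → Prop) (q : β → Prop) [DecidablePred p] [DecidablePred q] :
    (univ.filter fun w : α × β => p w.1 ∧ q w.2).card
      = (univ.filter p).card * (univ.filter q).card := by
  have h := Finset.filter_product (s := (univ : Finset α)) (t := (univ : Finset β)) p q
  calc (univ.filter fun w : α × β => p w.1 ∧ q w.2).card
      = ((univ ×ˢ univ).filter fun w : α × β => p w.1 ∧ q w.2).card := by
        rw [Finset.univ_product_univ]
    _ = ((univ.filter p) ×ˢ (univ.filter q)).card := by rw [h]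
    _ = _ := Finset.card_product _ _

theorem card_zero_filter {k : ℕ} (hk1 : 1 ≤ k) :
    (univ.filter fun x : ZMod (3^k) => d3 hk1 x = 0).card = 3^(k-1) :=
  fiber_card hk1 (0 : ZMod (3^1))

theorem card_unit_filter' {k : ℕ} (hk1 : 1 ≤ k) :
    (univ.filter fun x : ZMod (3^k) => ¬ d3 hk1 x = 0).card = 2*3^(k-1) :=
  card_unit_filter hk1

theorem case1_total {k : ℕ} (hk2 : 2 ≤ k) (a : ℤ) (ha : ¬ (3:ℤ) ∣ a) :
    (univ.filter fun v : ZMod (3^k) × ZMod (3^k) × ZMod (3^k) × ZMod (3^k) =>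
        d3 (le_trans one_le_two hk2) v.1 ≠ 0 ∧
        (a : ZMod (3^k))*v.1^3 + (a : ZMod (3^k))*v.2.1^3 + 3*v.2.2.1^3 + 3*v.2.2.2^3 = 0).card
      = ((2*3^(k-1)) * (3^k * 3^(k-1))) * 3 := by
  haveI := neZero_pow3 k
  rw [card_filter_quad_fst (fun x y z t =>
    d3 (le_trans one_le_two hk2) x ≠ 0 ∧
      (a : ZMod (3^k))*x^3 + (a : ZMod (3^k))*y^3 + 3*z^3 + 3*t^3 = 0)]
  rw [Finset.sum_congr rfl (fun w _ => count_case1 hk2 a ha w.1 w.2.1 w.2.2)]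
  rw [← Finset.sum_filter, Finset.sum_const, smul_eq_mul]
  congr 1
  rw [card_filter_mul (fun y : ZMod (3^k) => d3 (le_trans one_le_two hk2) y ≠ 0)
      (fun u : ZMod (3^k) × ZMod (3^k) => d3 (le_trans one_le_two hk2) (u.1+u.2) = 0),
    card_unit_filter (le_trans one_le_two hk2),
    card_pair_sum_zero (le_trans one_le_two hk2)]

theorem case2_pred_iff {k : ℕ} (hk2 : 2 ≤ k) (a : ℤ) (ha : ¬ (3:ℤ) ∣ a)
    (v : ZMod (3^k) × ZMod (3^k) × ZMod (3^k) × ZMod (3^k)) :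
    ((¬(d3 (le_trans one_le_two hk2) v.1 = 0 ∧ d3 (le_trans one_le_two hk2) v.2.1 = 0 ∧
          d3 (le_trans one_le_two hk2) v.2.2.1 = 0 ∧ d3 (le_trans one_le_two hk2) v.2.2.2 = 0) ∧
        (a : ZMod (3^k))*v.1^3 + (a : ZMod (3^k))*v.2.1^3 + 3*v.2.2.1^3 + 3*v.2.2.2^3 = 0) ∧
        d3 (le_trans one_le_two hk2) v.1 = 0)
      ↔ ((d3 (le_trans one_le_two hk2) v.1 = 0 ∧ d3 (le_trans one_le_two hk2) v.2.1 = 0 ∧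
          ¬ d3 (le_trans one_le_two hk2) v.2.2.1 = 0) ∧
        (a : ZMod (3^k))*v.1^3 + (a : ZMod (3^k))*v.2.1^3 + 3*v.2.2.1^3 + 3*v.2.2.2^3 = 0) := by
  haveI := neZero_pow3 k
  set hk1 : 1 ≤ k := le_trans one_le_two hk2
  have hA3 : d3 hk1 ((a : ℤ) : ZMod (3^k)) ≠ 0 := d3_intCast_ne hk1 a ha
  constructor
  · rintro ⟨⟨hnall, heq⟩, hx⟩
    have h0 := congrArg (d3 hk1) heq
    simp only [map_add, map_mul, map_pow, map_ofNat, map_zero] at h0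
    have hy : d3 hk1 v.2.1 = 0 :=
      Dc1 _ (d3 hk1 v.2.1) (d3 hk1 v.1) (d3 hk1 v.2.2.1) (d3 hk1 v.2.2.2) hA3
        (by linear_combination h0) hx
    have hz : ¬ d3 hk1 v.2.2.1 = 0 := by
      intro hzz
      apply hnall
      refine ⟨hx, hy, hzz, ?_⟩
      have h9 := congrArg (d9 hk2) heq
      simp only [map_add, map_mul, map_pow, map_ofNat, map_zero] at h9
      have hX3 : (d9 hk2 v.1)^3 = 0 := D5a _ (by rw [e3_d9 hk2]; exact hx)
      have hY3 : (d9 hk2 v.2.1)^3 = 0 := D5a _ (by rw [e3_d9 hk2]; exact hy)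
      have h3zt : (3:ZMod (3^2))*((d9 hk2 v.2.2.1)^3 + (d9 hk2 v.2.2.2)^3) = 0 := by
        linear_combination h9 - (d9 hk2 ((a:ℤ):ZMod (3^k)))*hX3
          - (d9 hk2 ((a:ℤ):ZMod (3^k)))*hY3
      have hS := D5b _ h3zt
      rw [← L23 _ _] at hS
      rw [map_add] at hS
      have hze3 : e3 (d9 hk2 v.2.2.1) = 0 := by rw [e3_d9 hk2]; exact hzz
      have hte3 : e3 (d9 hk2 v.2.2.2) = 0 := by linear_combination hS - hze3
      rw [e3_d9 hk2] at hte3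
      exact hte3
    exact ⟨⟨hx, hy, hz⟩, heq⟩
  · rintro ⟨⟨hx, hy, hz⟩, heq⟩
    exact ⟨⟨fun hall => hz hall.2.2.1, heq⟩, hx⟩

theorem case2_total {k : ℕ} (hk3 : 3 ≤ k) (hk2 : 2 ≤ k) (a : ℤ) (ha : ¬ (3:ℤ) ∣ a) :
    (univ.filter fun v : ZMod (3^k) × ZMod (3^k) × ZMod (3^k) × ZMod (3^k) =>
        (d3 (le_trans one_le_two hk2) v.1 = 0 ∧ d3 (le_trans one_le_two hk2) v.2.1 = 0 ∧
          ¬ d3 (le_trans one_le_two hk2) v.2.2.1 = 0) ∧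
        (a : ZMod (3^k))*v.1^3 + (a : ZMod (3^k))*v.2.1^3 + 3*v.2.2.1^3 + 3*v.2.2.2^3 = 0).card
      = (3^(k-1) * (3^(k-1) * (2*3^(k-1)))) * 9 := by
  haveI := neZero_pow3 k
  set hk1 : 1 ≤ k := le_trans one_le_two hk2 with hhk1
  rw [card_filter_quad_last (fun x y z t =>
    (d3 hk1 x = 0 ∧ d3 hk1 y = 0 ∧ ¬ d3 hk1 z = 0) ∧
      (a : ZMod (3^k))*x^3 + (a : ZMod (3^k))*y^3 + 3*z^3 + 3*t^3 = 0)]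
  have hinner : ∀ w : ZMod (3^k) × ZMod (3^k) × ZMod (3^k),
      (univ.filter fun t : ZMod (3^k) =>
        (d3 hk1 w.1 = 0 ∧ d3 hk1 w.2.1 = 0 ∧ ¬ d3 hk1 w.2.2 = 0) ∧
        (a : ZMod (3^k))*w.1^3 + (a : ZMod (3^k))*w.2.1^3 + 3*w.2.2^3 + 3*t^3 = 0).card
      = if (d3 hk1 w.1 = 0 ∧ d3 hk1 w.2.1 = 0 ∧ ¬ d3 hk1 w.2.2 = 0) then 9 else 0 := by
    intro w
    by_cases hc : (d3 hk1 w.1 = 0 ∧ d3 hk1 w.2.1 = 0 ∧ ¬ d3 hk1 w.2.2 = 0)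
    · rw [if_pos hc, filter_congr (fun t _ => and_iff_right hc)]
      exact count_case2 hk3 hk1 a w.1 w.2.1 w.2.2 hc.1 hc.2.1 hc.2.2
    · rw [if_neg hc, Finset.card_eq_zero, Finset.filter_eq_empty_iff]
      rintro t - ⟨hcond, -⟩
      exact hc hcond
  rw [Finset.sum_congr rfl (fun w _ => hinner w)]
  rw [← Finset.sum_filter, Finset.sum_const, smul_eq_mul]
  congr 1
  rw [card_filter_mul (fun x : ZMod (3^k) => d3 hk1 x = 0)
      (fun u : ZMod (3^k) × ZMod (3^k) => d3 hk1 u.1 = 0 ∧ ¬ d3 hk1 u.2 = 0),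
    card_zero_filter hk1]
  congr 1
  rw [card_filter_mul (fun x : ZMod (3^k) => d3 hk1 x = 0)
      (fun x : ZMod (3^k) => ¬ d3 hk1 x = 0),
    card_zero_filter hk1, card_unit_filter' hk1]


end P433


open Finset P433 in
theorem primitive_density_rkthree_three (a : ℤ) (ha : ¬ (3 : ℤ) ∣ a) (r : ℕ) (hr : 3 ≤ r) :
    (Nat.card {v : ZMod (3 ^ r) × ZMod (3 ^ r) × ZMod (3 ^ r) × ZMod (3 ^ r) //
        ¬ ((3 : ZMod (3 ^ r)) ∣ v.1 ∧ (3 : ZMod (3 ^ r)) ∣ v.2.1 ∧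
            (3 : ZMod (3 ^ r)) ∣ v.2.2.1 ∧ (3 : ZMod (3 ^ r)) ∣ v.2.2.2) ∧
          (a : ZMod (3 ^ r)) * v.1 ^ 3 + (a : ZMod (3 ^ r)) * v.2.1 ^ 3 +
            (3 : ZMod (3 ^ r)) * v.2.2.1 ^ 3 +
            (3 : ZMod (3 ^ r)) * v.2.2.2 ^ 3 = 0} : ℚ) / (3 : ℚ) ^ (3 * r) =
      4 / 3 := by
  obtain ⟨K, rfl⟩ : ∃ K, r = K + 3 := ⟨r - 3, by omega⟩
  have hk3 : 3 ≤ K + 3 := by omega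
  have hk2 : 2 ≤ K + 3 := by omega
  haveI := neZero_pow3 (K + 3)
  have main : ∀ N : ℕ, N = 4 * 3 ^ (3*K+8) → (N : ℚ) / (3:ℚ)^(3*(K+3)) = 4/3 := by
    intro N hN
    rw [hN]
    push_cast
    rw [div_eq_div_iff (by positivity) (by norm_num : (3:ℚ) ≠ 0)]
    rw [show 3*(K+3) = 3*K+9 from by ring]
    ring
  apply main
  have hiff : ∀ v : ZMod (3^(K+3)) × ZMod (3^(K+3)) × ZMod (3^(K+3)) × ZMod (3^(K+3)),
      (¬ ((3 : ZMod (3^(K+3))) ∣ v.1 ∧ (3 : ZMod (3^(K+3))) ∣ v.2.1 ∧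
          (3 : ZMod (3^(K+3))) ∣ v.2.2.1 ∧ (3 : ZMod (3^(K+3))) ∣ v.2.2.2) ∧
        (a : ZMod (3^(K+3))) * v.1^3 + (a : ZMod (3^(K+3))) * v.2.1^3 +
          (3 : ZMod (3^(K+3))) * v.2.2.1^3 + (3 : ZMod (3^(K+3))) * v.2.2.2^3 = 0)
      ↔ ((¬ (d3 (le_trans one_le_two hk2) v.1 = 0 ∧ d3 (le_trans one_le_two hk2) v.2.1 = 0 ∧
          d3 (le_trans one_le_two hk2) v.2.2.1 = 0 ∧ d3 (le_trans one_le_two hk2) v.2.2.2 = 0)) ∧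
        (a : ZMod (3^(K+3))) * v.1^3 + (a : ZMod (3^(K+3))) * v.2.1^3 +
          3 * v.2.2.1^3 + 3 * v.2.2.2^3 = 0) :=
    fun v => and_congr (not_congr (and_congr (dvd_iff_d3 _ _)
      (and_congr (dvd_iff_d3 _ _) (and_congr (dvd_iff_d3 _ _) (dvd_iff_d3 _ _))))) Iff.rfl
  rw [Nat.card_congr (Equiv.subtypeEquivRight hiff), Nat.card_eq_fintype_card,
    Fintype.card_subtype]
  have hsplit := Finset.card_filter_add_card_filter_not
    (s := univ.filter (fun v : ZMod (3^(K+3)) × ZMod (3^(K+3)) × ZMod (3^(K+3)) × ZMod (3^(K+3)) =>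
      (¬ (d3 (le_trans one_le_two hk2) v.1 = 0 ∧ d3 (le_trans one_le_two hk2) v.2.1 = 0 ∧
          d3 (le_trans one_le_two hk2) v.2.2.1 = 0 ∧ d3 (le_trans one_le_two hk2) v.2.2.2 = 0)) ∧
        (a : ZMod (3^(K+3))) * v.1^3 + (a : ZMod (3^(K+3))) * v.2.1^3 +
          3 * v.2.2.1^3 + 3 * v.2.2.2^3 = 0))
    (p := fun v => d3 (le_trans one_le_two hk2) v.1 = 0)
  rw [Finset.filter_filter, Finset.filter_filter] at hsplit
  rw [← hsplit]
  rw [filter_congr (fun v _ => case2_pred_iff hk2 a ha v), case2_total hk3 hk2 a ha]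
  have hiff1 : ∀ v : ZMod (3^(K+3)) × ZMod (3^(K+3)) × ZMod (3^(K+3)) × ZMod (3^(K+3)),
      (((¬ (d3 (le_trans one_le_two hk2) v.1 = 0 ∧ d3 (le_trans one_le_two hk2) v.2.1 = 0 ∧
          d3 (le_trans one_le_two hk2) v.2.2.1 = 0 ∧ d3 (le_trans one_le_two hk2) v.2.2.2 = 0)) ∧
        (a : ZMod (3^(K+3))) * v.1^3 + (a : ZMod (3^(K+3))) * v.2.1^3 +
          3 * v.2.2.1^3 + 3 * v.2.2.2^3 = 0) ∧ ¬ d3 (le_trans one_le_two hk2) v.1 = 0)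
      ↔ (d3 (le_trans one_le_two hk2) v.1 ≠ 0 ∧
        (a : ZMod (3^(K+3))) * v.1^3 + (a : ZMod (3^(K+3))) * v.2.1^3 +
          3 * v.2.2.1^3 + 3 * v.2.2.2^3 = 0) :=
    fun v => ⟨fun h => ⟨h.2, h.1.2⟩, fun h => ⟨⟨fun hall => h.1 hall.1, h.2⟩, h.1⟩⟩
  rw [filter_congr (fun v _ => hiff1 v), case1_total hk2 a ha]
  simp only [show K+3-1 = K+2 from rfl]
  ring
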